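/- Let a₁, a₂, a₃ be real numbers with 0 < a₃ < a₂ < a₁ < 1, and define f : ℝ → ℝ by f(x) = a₁·(1/2 + √(1/4 − (a₂/a₁)(1/4 − (1/2 − x)²)))·(1/2 + √(1/4 − (a₃/a₁)(1/4 − (1/2 − x)²))). Then f is strictly convex on the interval [0, 1]. -/

import Mathlib

private lemma sqrt_poly_strict_convex (α β γ : ℝ) (hα : 0 < α) (hβ : 0 < β) (hγ : 0 ≤ γ) :
    StrictConvexOn ℝ Set.univ
      (fun x : ℝ => Real.sqrt (α + β * (x - 1/2)^2 + γ * (x - 1/2)^4)) := by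
  set F : ℝ → ℝ := fun x => α + β * (x - 1/2)^2 + γ * (x - 1/2)^4 with hFdef
  have hFpos : ∀ x, 0 < F x := by
    intro x
    have h1 : 0 ≤ β * (x - 1/2)^2 := mul_nonneg hβ.le (sq_nonneg _)
    have h2 : 0 ≤ γ * (x - 1/2)^4 := mul_nonneg hγ (by positivity)
    simp only [hFdef]; linarith
  set F' : ℝ → ℝ := fun x => 2*β*(x - 1/2) + 4*γ*(x - 1/2)^3 with hF'def
  have hF' : ∀ x, HasDerivAt F (F' x) x := by
    intro x
    have h0 : HasDerivAt (fun y : ℝ => y - 1/2) 1 x := (hasDerivAt_id x).sub_const _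
    have h2 : HasDerivAt (fun y : ℝ => (y - 1/2)^2) (2*(x - 1/2)) x := by
      simpa using h0.fun_pow 2
    have h4 : HasDerivAt (fun y : ℝ => (y - 1/2)^4) (4*(x - 1/2)^3) x := by
      simpa using h0.fun_pow 4
    have h := ((h2.const_mul β).fun_add (h4.const_mul γ)).const_add α
    have hfun : F = fun y => α + (β*(y - 1/2)^2 + γ*(y - 1/2)^4) := by
      funext y; show α + β*(y - 1/2)^2 + γ*(y - 1/2)^4 = _; ring
    rw [hfun]
    refine h.congr_deriv ?_
    show _ = 2*β*(x - 1/2) + 4*γ*(x - 1/2)^3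
    ring
  set g : ℝ → ℝ := fun x => Real.sqrt (F x) with hgdef
  have hg : ∀ x, HasDerivAt g (F' x / (2 * Real.sqrt (F x))) x :=
    fun x => (hF' x).sqrt (hFpos x).ne'
  have hderivg : deriv g = fun x => F' x / (2 * Real.sqrt (F x)) :=
    funext fun x => (hg x).deriv
  have hcont : ContinuousOn g Set.univ :=
    (Differentiable.continuous fun x => (hg x).differentiableAt).continuousOn
  refine strictConvexOn_of_deriv2_pos convex_univ hcont ?_
  intro x _
  have hsx : 0 < Real.sqrt (F x) := Real.sqrt_pos.2 (hFpos x)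
  have hs2 : Real.sqrt (F x) ^ 2 = F x := Real.sq_sqrt (hFpos x).le
  set s := Real.sqrt (F x) with hsdef
  have hF'' : HasDerivAt F' (2*β + 12*γ*(x - 1/2)^2) x := by
    have h0 : HasDerivAt (fun y : ℝ => y - 1/2) 1 x := (hasDerivAt_id x).sub_const _
    have h3 : HasDerivAt (fun y : ℝ => (y - 1/2)^3) (3*(x - 1/2)^2) x := by
      simpa using h0.fun_pow 3
    have := (h0.const_mul (2*β)).fun_add (h3.const_mul (4*γ))
    refine this.congr_deriv ?_
    ring
  have hden : HasDerivAt (fun y => 2 * Real.sqrt (F y)) (2 * (F' x / (2 * s))) x :=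
    (hg x).const_mul 2
  have hdenne : 2 * s ≠ 0 := by positivity
  have hG : HasDerivAt (fun y => F' y / (2 * Real.sqrt (F y)))
      (((2*β + 12*γ*(x - 1/2)^2) * (2 * s) - F' x * (2 * (F' x / (2 * s)))) / (2 * s)^2) x :=
    hF''.div hden hdenne
  have hiter : deriv^[2] g x = deriv (deriv g) x := rfl
  rw [hiter, hderivg, hG.deriv]
  have key : 0 < 2 * F x * (2*β + 12*γ*(x - 1/2)^2) - (F' x)^2 := by
    have h1 : 0 ≤ γ * (x - 1/2)^2 := mul_nonneg hγ (sq_nonneg _)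
    have h2 : 0 ≤ β * γ * (x - 1/2)^4 := by positivity
    have h3 : 0 ≤ γ^2 * (x - 1/2)^6 := by positivity
    have h4 : 0 ≤ α * γ * (x - 1/2)^2 := by positivity
    have hab : 0 < α * β := mul_pos hα hβ
    simp only [hFdef, hF'def]
    nlinarith [sq_nonneg (x - 1/2)]
  apply div_pos
  · have he : F' x * (2 * (F' x / (2 * s))) = (F' x)^2 / s := by
      field_simp
    rw [he, sub_pos, div_lt_iff₀ hsx]
    have hss : (2*β + 12*γ*(x - 1/2)^2) * (2 * s) * s
        = 2 * F x * (2*β + 12*γ*(x - 1/2)^2) := by rw [← hs2]; ring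
    linarith [key, hss]
  · positivity

private lemma strictConvexOn_const_mul {s : Set ℝ} {f : ℝ → ℝ} {c : ℝ} (hc : 0 < c)
    (hf : StrictConvexOn ℝ s f) : StrictConvexOn ℝ s fun x => c * f x := by
  refine ⟨hf.1, fun x hx y hy hxy a b ha hb hab => ?_⟩
  have h := hf.2 hx hy hxy ha hb hab
  simp only [smul_eq_mul] at *
  nlinarith [h]

theorem fixed_point_function_strict_convexity
    (a₁ a₂ a₃ : ℝ)
    (ha₃ : 0 < a₃) (h₃₂ : a₃ < a₂) (h₂₁ : a₂ < a₁) (ha₁ : a₁ < 1)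
    (f : ℝ → ℝ)
    (hf : ∀ x : ℝ, f x =
      a₁ * (1/2 + Real.sqrt (1/4 - (a₂/a₁) * (1/4 - (1/2 - x)^2)))
         * (1/2 + Real.sqrt (1/4 - (a₃/a₁) * (1/4 - (1/2 - x)^2)))) :
    StrictConvexOn ℝ (Set.Icc 0 1) f := by
  have ha₁0 : 0 < a₁ := ha₃.trans (h₃₂.trans h₂₁)
  have hc₂0 : 0 < a₂/a₁ := div_pos (ha₃.trans h₃₂) ha₁0
  have hc₃0 : 0 < a₃/a₁ := div_pos ha₃ ha₁0
  have hc₂1 : a₂/a₁ < 1 := (div_lt_one ha₁0).2 h₂₁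
  have hc₃1 : a₃/a₁ < 1 := (div_lt_one ha₁0).2 (h₃₂.trans h₂₁)
  set c₂ := a₂/a₁
  set c₃ := a₃/a₁
  have hA₂ : 0 < (1 - c₂)/4 := by linarith
  have hA₃ : 0 < (1 - c₃)/4 := by linarith
  set A₂ := (1 - c₂)/4
  set A₃ := (1 - c₃)/4
  have S₂ := sqrt_poly_strict_convex A₂ c₂ 0 hA₂ hc₂0 le_rfl
  have S₃ := sqrt_poly_strict_convex A₃ c₃ 0 hA₃ hc₃0 le_rfl
  have S₄ := sqrt_poly_strict_convex (A₂*A₃) (A₂*c₃ + A₃*c₂) (c₂*c₃)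
    (mul_pos hA₂ hA₃) (by positivity) (by positivity)
  have hIcc : Convex ℝ (Set.Icc (0:ℝ) 1) := convex_Icc 0 1
  have T₂ := strictConvexOn_const_mul (by linarith : (0:ℝ) < a₁/2)
    (S₂.subset (Set.subset_univ _) hIcc)
  have T₃ := strictConvexOn_const_mul (by linarith : (0:ℝ) < a₁/2)
    (S₃.subset (Set.subset_univ _) hIcc)
  have T₄ := strictConvexOn_const_mul ha₁0 (S₄.subset (Set.subset_univ _) hIcc)
  have H := (T₂.add (T₃.add T₄)).add_const (a₁/4)
  have hfeq : f = (fun x =>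
      a₁/2 * Real.sqrt (A₂ + c₂ * (x - 1/2)^2 + 0 * (x - 1/2)^4) +
      (a₁/2 * Real.sqrt (A₃ + c₃ * (x - 1/2)^2 + 0 * (x - 1/2)^4) +
       a₁ * Real.sqrt (A₂*A₃ + (A₂*c₃ + A₃*c₂) * (x - 1/2)^2 + (c₂*c₃) * (x - 1/2)^4)))
      + fun _ => a₁/4 := by
    funext x
    simp only [Pi.add_apply]
    rw [hf x]
    have h2 : 1/4 - c₂ * (1/4 - (1/2 - x)^2) = A₂ + c₂ * (x - 1/2)^2 + 0 * (x - 1/2)^4 := by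
      simp only [A₂]; ring
    have h3 : 1/4 - c₃ * (1/4 - (1/2 - x)^2) = A₃ + c₃ * (x - 1/2)^2 + 0 * (x - 1/2)^4 := by
      simp only [A₃]; ring
    rw [h2, h3]
    have hE₂ : 0 ≤ A₂ + c₂ * (x - 1/2)^2 + 0 * (x - 1/2)^4 := by
      have := mul_nonneg hc₂0.le (sq_nonneg (x - 1/2)); linarith
    have hmul : Real.sqrt (A₂ + c₂ * (x - 1/2)^2 + 0 * (x - 1/2)^4) *
        Real.sqrt (A₃ + c₃ * (x - 1/2)^2 + 0 * (x - 1/2)^4) =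
        Real.sqrt (A₂*A₃ + (A₂*c₃ + A₃*c₂) * (x - 1/2)^2 + (c₂*c₃) * (x - 1/2)^4) := by
      rw [← Real.sqrt_mul hE₂]
      congr 1
      ring
    rw [← hmul]
    ring
  rw [hfeq]
  exact H
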